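/- Let T, T' : ℤ³ → ℝ be functions that are nonzero at every point with μ(i,j,k) ≥ 0 and that both satisfy the octahedron relation at every (i,j,k) ∈ ℤ³ with μ(i,j,k+1) ≥ 2t. If T(i,j,k) = T'(i,j,k) for every (i,j,k) in the initial-data band, then T(i,j,k) = T'(i,j,k) for every (i,j,k) with μ(i,j,k) ≥ 0; that is, the solution of the T-system is uniquely determined by its values on 2t consecutive (r,s,t)-slanted planes. -/
import Mathlib


/-- The solution of the T-system is uniquely determined by its values on
the `2t` consecutive (r,s,t)-slanted initial-data planes `0 ≤ r·i+s·j+t·k < 2t`. -/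
theorem Tsystem_unique_from_slanted_initial_data
    (r s t : ℤ) (hr0 : 0 ≤ r) (hrt : r < t) (hs0 : 0 ≤ s) (hst : s < t)
    (T T' : ℤ → ℤ → ℤ → ℝ)
    (hT0 : ∀ i j k : ℤ, 0 ≤ r * i + s * j + t * k → T i j k ≠ 0)
    (hT'0 : ∀ i j k : ℤ, 0 ≤ r * i + s * j + t * k → T' i j k ≠ 0)
    (hT : ∀ i j k : ℤ, 2 * t ≤ r * i + s * j + t * (k + 1) →
      T i j (k + 1) * T i j (k - 1)
        = T (i + 1) j k * T (i - 1) j k + T i (j + 1) k * T i (j - 1) k)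
    (hT' : ∀ i j k : ℤ, 2 * t ≤ r * i + s * j + t * (k + 1) →
      T' i j (k + 1) * T' i j (k - 1)
        = T' (i + 1) j k * T' (i - 1) j k + T' i (j + 1) k * T' i (j - 1) k)
    (hinit : ∀ i j k : ℤ, 0 ≤ r * i + s * j + t * k → r * i + s * j + t * k < 2 * t →
      T i j k = T' i j k) :
    ∀ i j k : ℤ, 0 ≤ r * i + s * j + t * k → T i j k = T' i j k := by
  suffices H : ∀ n : ℕ, ∀ i j k : ℤ, r * i + s * j + t * k = (n : ℤ) →
      T i j k = T' i j k by
    intro i j k h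
    exact H (r * i + s * j + t * k).toNat i j k (Int.toNat_of_nonneg h).symm
  intro n
  induction n using Nat.strong_induction_on with
  | _ n ih =>
    intro i j k hn
    by_cases hlt : r * i + s * j + t * k < 2 * t
    · exact hinit i j k (by omega) hlt
    · push_neg at hlt
      have ht : 0 < t := by omega
      have e0 : r * i + s * j + t * (k - 1 + 1) = r * i + s * j + t * k := by ring
      have key := hT i j (k - 1) (by rw [e0]; exact hlt)
      have key' := hT' i j (k - 1) (by rw [e0]; exact hlt)
      simp only [show k - 1 + 1 = k from by ring, show k - 1 - 1 = k - 2 from by ring]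
        at key key'
      have hA := hn
      -- helper equalities
      have h1 : T i j (k - 2) = T' i j (k - 2) := by
        have e : r * i + s * j + t * (k - 2) = r * i + s * j + t * k - 2 * t := by ring
        refine ih (r * i + s * j + t * k - 2 * t).toNat (by omega) i j (k - 2) ?_
        rw [e, Int.toNat_of_nonneg (by omega)]
      have h2 : T (i + 1) j (k - 1) = T' (i + 1) j (k - 1) := by
        have e : r * (i + 1) + s * j + t * (k - 1) = r * i + s * j + t * k + r - t := by ring
        refine ih (r * i + s * j + t * k + r - t).toNat (by omega) (i + 1) j (k - 1) ?_
        rw [e, Int.toNat_of_nonneg (by omega)]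
      have h3 : T (i - 1) j (k - 1) = T' (i - 1) j (k - 1) := by
        have e : r * (i - 1) + s * j + t * (k - 1) = r * i + s * j + t * k - r - t := by ring
        refine ih (r * i + s * j + t * k - r - t).toNat (by omega) (i - 1) j (k - 1) ?_
        rw [e, Int.toNat_of_nonneg (by omega)]
      have h4 : T i (j + 1) (k - 1) = T' i (j + 1) (k - 1) := by
        have e : r * i + s * (j + 1) + t * (k - 1) = r * i + s * j + t * k + s - t := by ring
        refine ih (r * i + s * j + t * k + s - t).toNat (by omega) i (j + 1) (k - 1) ?_
        rw [e, Int.toNat_of_nonneg (by omega)]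
      have h5 : T i (j - 1) (k - 1) = T' i (j - 1) (k - 1) := by
        have e : r * i + s * (j - 1) + t * (k - 1) = r * i + s * j + t * k - s - t := by ring
        refine ih (r * i + s * j + t * k - s - t).toNat (by omega) i (j - 1) (k - 1) ?_
        rw [e, Int.toNat_of_nonneg (by omega)]
      have hnz : T i j (k - 2) ≠ 0 := by
        apply hT0
        have e : r * i + s * j + t * (k - 2) = r * i + s * j + t * k - 2 * t := by ring
        omega
      have : T i j k * T i j (k - 2) = T' i j k * T i j (k - 2) := by
        rw [key, h1, key', h2, h3, h4, h5]
      exact mul_right_cancel₀ hnz this
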